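/- Let F : ℝ → ℂ be three times continuously differentiable with F′(0) = 0 and F″(0) = 0. Then for every λ > 0 and all x, y ∈ ℝ one has F(λ|x−y|) = F(λ|x|) − λ·y·sgn(x)·F′(λ|x|) + (λ²y²/2)·F″(λ|x|) − (λ³y³/2)·∫₀¹ (1−θ)²·sgn(x−θy)·F‴(λ|x−θy|) dθ. -/

import Mathlib

open MeasureTheory Set

private lemma glue_deriv {f : ℝ → ℂ} {a : ℂ} {t : ℝ} (h1 : HasDerivWithinAt f a (Iic t) t)
    (h2 : HasDerivWithinAt f a (Ici t) t) : HasDerivAt f a t := by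
  have := h1.union h2
  rwa [Iic_union_Ici, hasDerivWithinAt_univ] at this

private lemma scomp_lin {F F1 : ℝ → ℂ} (hd : ∀ s, HasDerivAt F (F1 s) s) (c t : ℝ) :
    HasDerivAt (fun s => F (c * s)) ((c : ℝ) • F1 (c * t)) t :=
  (hd (c * t)).scomp t (by simpa using (hasDerivAt_id t).const_mul c)

lemma level1 {F F1 : ℝ → ℂ} (hd : ∀ s, HasDerivAt F (F1 s) s) (hF10 : F1 0 = 0)
    (l : ℝ) (t : ℝ) :
    HasDerivAt (fun s => F (l * |s|)) ((l : ℂ) * (Real.sign t : ℂ) * F1 (l * |t|)) t := by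
  rcases lt_trichotomy t 0 with ht | rfl | ht
  · have h := scomp_lin hd (-l) t
    have he : (fun s => F (-l * s)) =ᶠ[nhds t] fun s => F (l * |s|) := by
      filter_upwards [Iio_mem_nhds ht] with s hs
      rw [abs_of_neg hs]; ring_nf
    have := h.congr_of_eventuallyEq he.symm
    convert this using 1
    · rfl
    rw [Real.sign_of_neg ht, abs_of_neg ht, Complex.real_smul]
    push_cast; ring_nf
  · have hr : HasDerivWithinAt (fun s => F (l * |s|)) ((l : ℝ) • F1 (l * 0)) (Ici 0) 0 := by
      refine ((scomp_lin hd l 0).hasDerivWithinAt).congr (fun s hs => ?_) (by simp)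
      rw [abs_of_nonneg hs]
    have hl' : HasDerivWithinAt (fun s => F (l * |s|)) ((-l : ℝ) • F1 (-l * 0)) (Iic 0) 0 := by
      refine ((scomp_lin hd (-l) 0).hasDerivWithinAt).congr (fun s hs => ?_) (by simp)
      rw [abs_of_nonpos hs]; ring_nf
    have h0 : F1 (l * 0) = 0 := by simpa using hF10
    have h0' : F1 (-l * 0) = 0 := by simpa using hF10
    rw [h0, smul_zero] at hr
    rw [h0', smul_zero] at hl'
    have := glue_deriv hl' hr
    simpa using this
  · have h := scomp_lin hd l t
    have he : (fun s => F (l * s)) =ᶠ[nhds t] fun s => F (l * |s|) := by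
      filter_upwards [Ioi_mem_nhds ht] with s hs
      rw [abs_of_pos hs]
    have := h.congr_of_eventuallyEq he.symm
    convert this using 1
    · rfl
    rw [Real.sign_of_pos ht, abs_of_pos ht, Complex.real_smul]
    push_cast; ring

lemma level2 {F1 F2 : ℝ → ℂ} (hd : ∀ s, HasDerivAt F1 (F2 s) s) (hF10 : F1 0 = 0)
    (hF20 : F2 0 = 0) (l : ℝ) (t : ℝ) :
    HasDerivAt (fun s => (l : ℂ) * (Real.sign s : ℂ) * F1 (l * |s|))
      ((l : ℂ) ^ 2 * F2 (l * |t|)) t := by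
  rcases lt_trichotomy t 0 with ht | rfl | ht
  · have h := ((scomp_lin hd (-l) t).const_mul (-(l : ℂ)))
    have he : (fun s => -(l : ℂ) * F1 (-l * s)) =ᶠ[nhds t]
        fun s => (l : ℂ) * (Real.sign s : ℂ) * F1 (l * |s|) := by
      filter_upwards [Iio_mem_nhds ht] with s hs
      rw [Real.sign_of_neg hs, abs_of_neg hs]
      push_cast; ring_nf
    have := h.congr_of_eventuallyEq he.symm
    convert this using 1
    · rfl
    rw [abs_of_neg ht, Complex.real_smul]
    push_cast; ring_nf
  · have hr : HasDerivWithinAt (fun s => (l : ℂ) * (Real.sign s : ℂ) * F1 (l * |s|))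
        ((l : ℂ) * ((l : ℝ) • F2 (l * 0))) (Ici 0) 0 := by
      refine (((scomp_lin hd l 0).const_mul (l : ℂ)).hasDerivWithinAt).congr
        (fun s hs => ?_) (by simp [hF10])
      rcases eq_or_lt_of_le (show (0:ℝ) ≤ s from hs) with h' | hs'
      · subst h'; simp [hF10]
      · rw [Real.sign_of_pos hs', abs_of_pos hs']; push_cast; ring
    have hl' : HasDerivWithinAt (fun s => (l : ℂ) * (Real.sign s : ℂ) * F1 (l * |s|))
        (-(l : ℂ) * ((-l : ℝ) • F2 (-l * 0))) (Iic 0) 0 := by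
      refine (((scomp_lin hd (-l) 0).const_mul (-(l : ℂ))).hasDerivWithinAt).congr
        (fun s hs => ?_) (by simp [hF10])
      rcases eq_or_lt_of_le (show s ≤ (0:ℝ) from hs) with h' | hs'
      · subst h'; simp [hF10]
      · rw [Real.sign_of_neg hs', abs_of_neg hs']; push_cast; ring_nf
    have h0 : F2 (l * 0) = 0 := by simpa using hF20
    have h0' : F2 (-l * 0) = 0 := by simpa using hF20
    rw [h0, smul_zero, mul_zero] at hr
    rw [h0', smul_zero, mul_zero] at hl'
    have := glue_deriv hl' hr
    simpa [hF20] using this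
  · have h := ((scomp_lin hd l t).const_mul ((l : ℂ)))
    have he : (fun s => (l : ℂ) * F1 (l * s)) =ᶠ[nhds t]
        fun s => (l : ℂ) * (Real.sign s : ℂ) * F1 (l * |s|) := by
      filter_upwards [Ioi_mem_nhds ht] with s hs
      rw [Real.sign_of_pos hs, abs_of_pos hs]; push_cast; ring
    have := h.congr_of_eventuallyEq he.symm
    convert this using 1
    · rfl
    rw [abs_of_pos ht, Complex.real_smul]
    push_cast; ring

lemma level3 {F2 F3 : ℝ → ℂ} (hd : ∀ s, HasDerivAt F2 (F3 s) s) (l : ℝ) {t : ℝ} (ht : t ≠ 0) :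
    HasDerivAt (fun s => (l : ℂ) ^ 2 * F2 (l * |s|))
      ((l : ℂ) ^ 3 * (Real.sign t : ℂ) * F3 (l * |t|)) t := by
  rcases ht.lt_or_gt with ht | ht
  · have h := ((scomp_lin hd (-l) t).const_mul ((l : ℂ) ^ 2))
    have he : (fun s => (l : ℂ) ^ 2 * F2 (-l * s)) =ᶠ[nhds t]
        fun s => (l : ℂ) ^ 2 * F2 (l * |s|) := by
      filter_upwards [Iio_mem_nhds ht] with s hs
      rw [abs_of_neg hs]; ring_nf
    have := h.congr_of_eventuallyEq he.symm
    convert this using 1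
    · rfl
    rw [Real.sign_of_neg ht, abs_of_neg ht, Complex.real_smul]
    push_cast; ring_nf
  · have h := ((scomp_lin hd l t).const_mul ((l : ℂ) ^ 2))
    have he : (fun s => (l : ℂ) ^ 2 * F2 (l * s)) =ᶠ[nhds t]
        fun s => (l : ℂ) ^ 2 * F2 (l * |s|) := by
      filter_upwards [Ioi_mem_nhds ht] with s hs
      rw [abs_of_pos hs]
    have := h.congr_of_eventuallyEq he.symm
    convert this using 1
    · rfl
    rw [Real.sign_of_pos ht, abs_of_pos ht, Complex.real_smul]
    push_cast; ring

lemma measurable_realSign : Measurable Real.sign := by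
  unfold Real.sign
  exact Measurable.ite (measurableSet_lt measurable_id measurable_const) measurable_const
    (Measurable.ite (measurableSet_lt measurable_const measurable_id) measurable_const
      measurable_const)

lemma abs_realSign_le_one (r : ℝ) : |Real.sign r| ≤ 1 := by
  rcases Real.sign_apply_eq r with h | h | h <;> simp [h]

theorem taylor_aux {F F1 F2 F3 : ℝ → ℂ}
    (hd1 : ∀ s, HasDerivAt F (F1 s) s) (hd2 : ∀ s, HasDerivAt F1 (F2 s) s)
    (hd3 : ∀ s, HasDerivAt F2 (F3 s) s) (hc2 : Continuous F2) (hc3 : Continuous F3)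
    (h10 : F1 0 = 0) (h20 : F2 0 = 0) (l x y : ℝ) (hy : y ≠ 0) :
    F (l * |x - y|) = F (l * |x|)
      - (l : ℂ) * (y : ℂ) * (Real.sign x : ℂ) * F1 (l * |x|)
      + (l : ℂ) ^ 2 * (y : ℂ) ^ 2 / 2 * F2 (l * |x|)
      - (l : ℂ) ^ 3 * (y : ℂ) ^ 3 / 2 *
        ∫ θ in (0:ℝ)..1, (((1 - θ) ^ 2 : ℝ) : ℂ) * (Real.sign (x - θ * y) : ℂ) *
          F3 (l * |x - θ * y|) := by
  have hdi : ∀ θ : ℝ, HasDerivAt (fun θ : ℝ => x - θ * y) (-y) θ :=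
    fun θ => (hasDerivAt_mul_const y).const_sub x
  -- derivative of g0
  have hg0 : ∀ θ : ℝ, HasDerivAt (fun θ : ℝ => F (l * |x - θ * y|))
      (-(y:ℂ) * ((l:ℂ) * (Real.sign (x - θ*y) : ℂ) * F1 (l * |x - θ*y|))) θ := by
    intro θ
    have h := (level1 hd1 h10 l (x - θ*y)).scomp θ (hdi θ)
    rw [Function.comp_def] at h
    convert h using 1
    · rfl
    rw [Complex.real_smul]; push_cast; ring
  have hg1 : ∀ θ : ℝ, HasDerivAt
      (fun θ : ℝ => -(y:ℂ) * ((l:ℂ) * (Real.sign (x - θ*y) : ℂ) * F1 (l * |x - θ*y|)))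
      ((y:ℂ)^2 * ((l:ℂ)^2 * F2 (l * |x - θ*y|))) θ := by
    intro θ
    have h := ((level2 hd2 h10 h20 l (x - θ*y)).scomp θ (hdi θ)).const_mul (-(y:ℂ))
    rw [Function.comp_def] at h
    convert h using 1
    · rfl
    rw [Complex.real_smul]; push_cast; ring
  have hg2 : ∀ θ : ℝ, x - θ*y ≠ 0 → HasDerivAt
      (fun θ : ℝ => (y:ℂ)^2 * ((l:ℂ)^2 * F2 (l * |x - θ*y|)))
      (-(y:ℂ)^3 * ((l:ℂ)^3 * (Real.sign (x - θ*y) : ℂ) * F3 (l * |x - θ*y|))) θ := by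
    intro θ hne
    have h := ((level3 hd3 l hne).scomp θ (hdi θ)).const_mul ((y:ℂ)^2)
    rw [Function.comp_def] at h
    convert h using 1
    · rfl
    rw [Complex.real_smul]; push_cast; ring
  -- coefficient derivatives
  have hc1 : ∀ θ : ℝ, HasDerivAt (fun θ : ℝ => ((1 - θ : ℝ) : ℂ)) (((-1 : ℝ) : ℂ)) θ :=
    fun θ => ((hasDerivAt_id θ).const_sub 1).ofReal_comp
  have hcq : ∀ θ : ℝ, HasDerivAt (fun θ : ℝ => (((1 - θ)^2/2 : ℝ) : ℂ)) (((-(1-θ) : ℝ) : ℂ)) θ := by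
    intro θ
    have h : HasDerivAt (fun θ : ℝ => (1-θ)^2/2) (-(1-θ)) θ := by
      have := (((hasDerivAt_id θ).const_sub 1).pow 2).div_const 2
      convert this using 1
      · rfl
      · rfl
      · rfl
      simp; ring
    exact h.ofReal_comp
  -- derivative of H
  have hH : ∀ θ : ℝ, x - θ*y ≠ 0 → HasDerivAt
      (fun θ : ℝ => F (l * |x - θ*y|)
        + ((1 - θ : ℝ) : ℂ) * (-(y:ℂ) * ((l:ℂ) * (Real.sign (x - θ*y) : ℂ) * F1 (l * |x - θ*y|)))
        + (((1 - θ)^2/2 : ℝ) : ℂ) * ((y:ℂ)^2 * ((l:ℂ)^2 * F2 (l * |x - θ*y|))))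
      ((((1 - θ)^2/2 : ℝ) : ℂ) *
        (-(y:ℂ)^3 * ((l:ℂ)^3 * (Real.sign (x - θ*y) : ℂ) * F3 (l * |x - θ*y|)))) θ := by
    intro θ hne
    have h := ((hg0 θ).add ((hc1 θ).mul (hg1 θ))).add ((hcq θ).mul (hg2 θ hne))
    convert h using 1
    · rfl
    · rfl
    push_cast; ring
  -- continuity of H
  have hi_cont : Continuous (fun θ : ℝ => x - θ * y) := by fun_prop
  have habs : Continuous (fun θ : ℝ => l * |x - θ * y|) := by fun_prop
  have c0 : Continuous (fun θ : ℝ => F (l * |x - θ*y|)) :=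
    continuous_iff_continuousAt.2 fun θ => (hg0 θ).continuousAt
  have c1 : Continuous
      (fun θ : ℝ => -(y:ℂ) * ((l:ℂ) * (Real.sign (x - θ*y) : ℂ) * F1 (l * |x - θ*y|))) :=
    continuous_iff_continuousAt.2 fun θ => (hg1 θ).continuousAt
  have c2 : Continuous (fun θ : ℝ => (y:ℂ)^2 * ((l:ℂ)^2 * F2 (l * |x - θ*y|))) :=
    continuous_const.mul (continuous_const.mul (hc2.comp habs))
  have cco1 : Continuous (fun θ : ℝ => ((1 - θ : ℝ) : ℂ)) :=
    Complex.continuous_ofReal.comp (by fun_prop)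
  have cco2 : Continuous (fun θ : ℝ => (((1 - θ)^2/2 : ℝ) : ℂ)) :=
    Complex.continuous_ofReal.comp (by fun_prop)
  have hHc : Continuous (fun θ : ℝ => F (l * |x - θ*y|)
        + ((1 - θ : ℝ) : ℂ) * (-(y:ℂ) * ((l:ℂ) * (Real.sign (x - θ*y) : ℂ) * F1 (l * |x - θ*y|)))
        + (((1 - θ)^2/2 : ℝ) : ℂ) * ((y:ℂ)^2 * ((l:ℂ)^2 * F2 (l * |x - θ*y|)))) :=
    (c0.add (cco1.mul c1)).add (cco2.mul c2)
  -- integrability of the integrand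
  have hsign_meas : Measurable (fun θ : ℝ => ((Real.sign (x - θ*y) : ℝ) : ℂ)) :=
    Complex.measurable_ofReal.comp (measurable_realSign.comp hi_cont.measurable)
  have hφmeas : Measurable (fun θ : ℝ => (((1 - θ)^2/2 : ℝ) : ℂ) *
      (-(y:ℂ)^3 * ((l:ℂ)^3 * (Real.sign (x - θ*y) : ℂ) * F3 (l * |x - θ*y|)))) := by
    apply (cco2.measurable).mul
    apply measurable_const.mul
    exact (measurable_const.mul hsign_meas).mul (hc3.comp habs).measurable
  have hψc : Continuous (fun θ : ℝ => (((1 - θ)^2/2 : ℝ) : ℂ) *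
      ((y:ℂ)^3 * ((l:ℂ)^3 * F3 (l * |x - θ*y|)))) :=
    cco2.mul (continuous_const.mul (continuous_const.mul (hc3.comp habs)))
  have hφint : IntervalIntegrable (fun θ : ℝ => (((1 - θ)^2/2 : ℝ) : ℂ) *
      (-(y:ℂ)^3 * ((l:ℂ)^3 * (Real.sign (x - θ*y) : ℂ) * F3 (l * |x - θ*y|))))
      volume 0 1 := by
    apply (hψc.intervalIntegrable 0 1).mono_fun hφmeas.aestronglyMeasurable
    filter_upwards [] with θ
    have heq : (((1 - θ)^2/2 : ℝ) : ℂ) *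
        (-(y:ℂ)^3 * ((l:ℂ)^3 * (Real.sign (x - θ*y) : ℂ) * F3 (l * |x - θ*y|)))
        = -((Real.sign (x - θ*y) : ℂ)) *
          ((((1 - θ)^2/2 : ℝ) : ℂ) * ((y:ℂ)^3 * ((l:ℂ)^3 * F3 (l * |x - θ*y|)))) := by ring
    rw [heq, norm_mul, norm_neg, Complex.norm_real, Real.norm_eq_abs]
    exact mul_le_of_le_one_left (norm_nonneg _) (abs_realSign_le_one _)
  -- FTC
  have key := MeasureTheory.integral_eq_of_hasDerivAt_off_countable_of_le
    (fun θ : ℝ => F (l * |x - θ*y|)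
        + ((1 - θ : ℝ) : ℂ) * (-(y:ℂ) * ((l:ℂ) * (Real.sign (x - θ*y) : ℂ) * F1 (l * |x - θ*y|)))
        + (((1 - θ)^2/2 : ℝ) : ℂ) * ((y:ℂ)^2 * ((l:ℂ)^2 * F2 (l * |x - θ*y|))))
    (fun θ : ℝ => (((1 - θ)^2/2 : ℝ) : ℂ) *
      (-(y:ℂ)^3 * ((l:ℂ)^3 * (Real.sign (x - θ*y) : ℂ) * F3 (l * |x - θ*y|))))
    zero_le_one (countable_singleton (x/y)) hHc.continuousOn
    (fun θ hθ => hH θ (by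
      intro h
      apply hθ.2
      simp only [mem_singleton_iff]
      field_simp
      linarith [h]))
    hφint
  -- compute endpoint values
  have hH1 : (fun θ : ℝ => F (l * |x - θ*y|)
        + ((1 - θ : ℝ) : ℂ) * (-(y:ℂ) * ((l:ℂ) * (Real.sign (x - θ*y) : ℂ) * F1 (l * |x - θ*y|)))
        + (((1 - θ)^2/2 : ℝ) : ℂ) * ((y:ℂ)^2 * ((l:ℂ)^2 * F2 (l * |x - θ*y|)))) 1
      = F (l * |x - y|) := by norm_num
  have hH0 : (fun θ : ℝ => F (l * |x - θ*y|)
        + ((1 - θ : ℝ) : ℂ) * (-(y:ℂ) * ((l:ℂ) * (Real.sign (x - θ*y) : ℂ) * F1 (l * |x - θ*y|)))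
        + (((1 - θ)^2/2 : ℝ) : ℂ) * ((y:ℂ)^2 * ((l:ℂ)^2 * F2 (l * |x - θ*y|)))) 0
      = F (l * |x|) - (y:ℂ) * ((l:ℂ) * (Real.sign x : ℂ) * F1 (l * |x|))
          + ((y:ℂ)^2 * ((l:ℂ)^2 * F2 (l * |x|))) / 2 := by
    norm_num
    ring
  -- rewrite the integral as a constant times the statement's integral
  have hint2 : (∫ θ in (0:ℝ)..1, (((1 - θ)^2/2 : ℝ) : ℂ) *
      (-(y:ℂ)^3 * ((l:ℂ)^3 * (Real.sign (x - θ*y) : ℂ) * F3 (l * |x - θ*y|))))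
      = (-(l:ℂ)^3 * (y:ℂ)^3 / 2) * ∫ θ in (0:ℝ)..1, (((1 - θ) ^ 2 : ℝ) : ℂ) *
          (Real.sign (x - θ * y) : ℂ) * F3 (l * |x - θ * y|) := by
    rw [← intervalIntegral.integral_const_mul]
    apply intervalIntegral.integral_congr
    intro θ _
    push_cast; ring
  beta_reduce at hH1 hH0
  rw [hint2, hH1, hH0] at key
  linear_combination -key

/-- Lemma 3.4 (iii): third-order Taylor-type expansion of `F (λ|x-y|)` when
`F'(0) = 0` and `F''(0) = 0`. -/
theorem stmt2 (F : ℝ → ℂ) (hF : ContDiff ℝ 3 F)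
    (hF'0 : deriv F 0 = 0) (hF''0 : iteratedDeriv 2 F 0 = 0)
    (l : ℝ) (hl : 0 < l) (x y : ℝ) :
    F (l * |x - y|) = F (l * |x|)
      - (l : ℂ) * (y : ℂ) * (Real.sign x : ℂ) * deriv F (l * |x|)
      + (l : ℂ) ^ 2 * (y : ℂ) ^ 2 / 2 * iteratedDeriv 2 F (l * |x|)
      - (l : ℂ) ^ 3 * (y : ℂ) ^ 3 / 2 *
        ∫ θ in (0:ℝ)..1, (((1 - θ) ^ 2 : ℝ) : ℂ) * (Real.sign (x - θ * y) : ℂ) *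
          iteratedDeriv 3 F (l * |x - θ * y|) := by
  have h2eq : iteratedDeriv 2 F = deriv (deriv F) := by
    rw [show (2:ℕ) = 1+1 from rfl, iteratedDeriv_succ, iteratedDeriv_one]
  have h3eq : iteratedDeriv 3 F = deriv (deriv (deriv F)) := by
    rw [show (3:ℕ) = 2+1 from rfl, iteratedDeriv_succ,
      show (2:ℕ) = 1+1 from rfl, iteratedDeriv_succ, iteratedDeriv_one]
  rw [h2eq, h3eq]
  rw [h2eq] at hF''0
  rcases eq_or_ne y 0 with rfl | hy
  · simp
  · have h3 : ContDiff ℝ ((2:WithTop ℕ∞) + 1) F := by exact_mod_cast hF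
    have h2 : ContDiff ℝ 2 (deriv F) := by
      have := (contDiff_succ_iff_deriv.mp h3).2.2
      exact_mod_cast this
    have h2' : ContDiff ℝ ((1:WithTop ℕ∞) + 1) (deriv F) := by exact_mod_cast h2
    have h1 : ContDiff ℝ 1 (deriv (deriv F)) := by
      have := (contDiff_succ_iff_deriv.mp h2').2.2
      exact_mod_cast this
    exact taylor_aux (fun s => (hF.differentiable (by norm_num) s).hasDerivAt)
      (fun s => (h2.differentiable (by norm_num) s).hasDerivAt)
      (fun s => (h1.differentiable (by norm_num) s).hasDerivAt)
      h1.continuous (h1.continuous_deriv le_rfl) hF'0 hF''0 l x y hy
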